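/- Let F_2 be the free group of rank 2. Then Φ_f(F_2) is trivial. -/

import Mathlib

/-! Auxiliary machinery: given a reduced word over `Fin 2`, we build two permutations of `ℕ`
moving `0` along a path, then complete to a transitive action on `{0, ..., p-1}` for a
prime `p`, producing a maximal finite-index subgroup avoiding the given element. -/

/-- No cancelling adjacent pair. -/
def NCword (t : List (Fin 2 × Bool)) : Prop :=
  ∀ j (h1 : j < t.length) (h2 : j + 1 < t.length),
    (t[j]'h1).1 = (t[j+1]'h2).1 → (t[j]'h1).2 = (t[j+1]'h2).2

lemma NCword_tail {a : Fin 2 × Bool} {t : List (Fin 2 × Bool)} (h : NCword (a :: t)) :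
    NCword t := by
  intro j h1 h2 hg
  have := h (j+1) (by simpa using Nat.succ_lt_succ h1) (by simpa using Nat.succ_lt_succ h2)
  simpa using this (by simpa using hg)

lemma NCword_reverse {l : List (Fin 2 × Bool)} (h : NCword l) : NCword l.reverse := by
  intro j h1 h2 hg
  have h1' : j < l.length := by simpa using h1
  have h2' : j + 1 < l.length := by simpa using h2
  have e1 : l.reverse[j]'h1 = l[(l.length - 1 - (j+1)) + 1]'(by omega) := by
    rw [List.getElem_reverse]
    congr 1
    omega
  have e2 : l.reverse[j+1]'h2 = l[l.length - 1 - (j+1)]'(by omega) := by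
    rw [List.getElem_reverse]
  rw [e1, e2] at hg ⊢
  exact (h (l.length - 1 - (j+1)) (by omega) (by omega) hg.symm).symm

/-- One update step. -/
def updP (m : ℕ) (a : Fin 2 × Bool) (s : Fin 2 → Equiv.Perm ℕ) : Fin 2 → Equiv.Perm ℕ :=
  fun i =>
    if i = a.1 then
      (cond a.2 (Equiv.swap (s a.1 m) (m+1) * s a.1)
        (s a.1 * Equiv.swap ((s a.1)⁻¹ m) (m+1)))
    else s i

lemma updP_self (m : ℕ) (a : Fin 2 × Bool) (s : Fin 2 → Equiv.Perm ℕ) :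
    updP m a s a.1 = cond a.2 (Equiv.swap (s a.1 m) (m+1) * s a.1)
      (s a.1 * Equiv.swap ((s a.1)⁻¹ m) (m+1)) := by
  simp [updP]

lemma updP_other (m : ℕ) (a : Fin 2 × Bool) (s : Fin 2 → Equiv.Perm ℕ) {i : Fin 2}
    (h : i ≠ a.1) : updP m a s i = s i := by
  simp [updP, h]

/-- Build permutations realizing all letter-constraints of a word, starting at position `m`. -/
def buildP (s : Fin 2 → Equiv.Perm ℕ) (m : ℕ) : List (Fin 2 × Bool) → (Fin 2 → Equiv.Perm ℕ)
  | [] => s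
  | a :: t => buildP (updP m a s) (m+1) t

lemma perm_fix_le {σ : Equiv.Perm ℕ} {m : ℕ} (h : ∀ j, m < j → σ j = j) :
    ∀ x, x ≤ m → σ x ≤ m := by
  intro x hx
  by_contra hc
  push_neg at hc
  have h2 : σ (σ x) = σ x := h (σ x) hc
  have h3 : σ x = x := σ.injective h2
  omega

lemma updP_fix {s : Fin 2 → Equiv.Perm ℕ} {m : ℕ} {a : Fin 2 × Bool}
    (hfix : ∀ i j, m < j → s i j = j) : ∀ i j, m + 1 < j → updP m a s i j = j := by
  intro i j hj
  have hsle : s a.1 m ≤ m := perm_fix_le (hfix a.1) m le_rfl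
  by_cases hi : i = a.1
  · rw [hi, updP_self]
    cases hb : a.2
    · simp only [cond_false]
      rw [Equiv.Perm.mul_apply]
      have hj1 : j ≠ (s a.1)⁻¹ m := by
        intro hc
        have h2 : s a.1 j = m := by rw [hc]; exact (s a.1).apply_symm_apply m
        rw [hfix a.1 j (by omega)] at h2
        omega
      rw [Equiv.swap_apply_of_ne_of_ne hj1 (by omega)]
      exact hfix a.1 j (by omega)
    · simp only [cond_true]
      rw [Equiv.Perm.mul_apply, hfix a.1 j (by omega)]
      exact Equiv.swap_apply_of_ne_of_ne (by omega) (by omega)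
  · rw [updP_other _ _ _ hi]; exact hfix i j (by omega)

lemma buildP_fix : ∀ (t : List (Fin 2 × Bool)) (s : Fin 2 → Equiv.Perm ℕ) (m : ℕ),
    (∀ i j, m < j → s i j = j) → ∀ i j, m + t.length < j → buildP s m t i j = j
  | [], s, m, h, i, j, hj => h i j (by simpa using hj)
  | a :: t, s, m, h, i, j, hj => by
    simp only [buildP]
    exact buildP_fix t _ (m+1) (updP_fix h) i j (by simp at hj ⊢; omega)

lemma buildP_pres : ∀ (t : List (Fin 2 × Bool)) (s : Fin 2 → Equiv.Perm ℕ) (m : ℕ)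
    (i : Fin 2) (x y : ℕ), s i x = y → x ≤ m → y ≤ m →
    (∀ b : Bool, t.head? = some (i, b) → (b = true → x ≠ m) ∧ (b = false → y ≠ m)) →
    buildP s m t i x = y
  | [], _, _, _, _, _, hs, _, _, _ => hs
  | a :: t, s, m, i, x, y, hs, hx, hy, hhead => by
    simp only [buildP]
    refine buildP_pres t _ (m+1) i x y ?_ (by omega) (by omega) ?_
    · by_cases hi : i = a.1
      · have ha : (a :: t).head? = some (i, a.2) := by
          rw [List.head?_cons]
          congr 1
          rw [hi]
        rw [hi, updP_self]
        cases hb : a.2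
        · have hyne : y ≠ m := (hhead a.2 ha).2 hb
          simp only [cond_false]
          rw [Equiv.Perm.mul_apply]
          have hx1 : x ≠ (s a.1)⁻¹ m := by
            intro hc
            have h2 : s a.1 x = m := by rw [hc]; exact (s a.1).apply_symm_apply m
            rw [← hi, hs] at h2
            exact hyne h2
          rw [Equiv.swap_apply_of_ne_of_ne hx1 (by omega)]
          rw [← hi]; exact hs
        · have hxne : x ≠ m := (hhead a.2 ha).1 hb
          simp only [cond_true]
          rw [Equiv.Perm.mul_apply]
          have hsx : s a.1 x = y := by rw [← hi]; exact hs
          rw [hsx]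
          refine Equiv.swap_apply_of_ne_of_ne ?_ (by omega)
          intro hc
          exact hxne ((s a.1).injective (by rw [hsx, hc]))
      · rw [updP_other _ _ _ hi]; exact hs
    · intro b _
      exact ⟨fun _ => by omega, fun _ => by omega⟩

lemma buildP_claims : ∀ (t : List (Fin 2 × Bool)) (s : Fin 2 → Equiv.Perm ℕ) (m : ℕ),
    (∀ i j, m < j → s i j = j) → NCword t →
    ∀ j (hj : j < t.length),
      ((t[j]'hj).2 = true → buildP s m t (t[j]'hj).1 (m+j) = m+j+1) ∧
      ((t[j]'hj).2 = false → buildP s m t (t[j]'hj).1 (m+j+1) = m+j)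
  | [], _, _, _, _ => by intro j hj; simp at hj
  | a :: t, s, m, hfix, hnc => by
    intro j hj
    match j with
    | 0 =>
      simp only [List.getElem_cons_zero, buildP, Nat.add_zero]
      constructor
      · intro hb
        refine buildP_pres t _ (m+1) a.1 m (m+1) ?_ (by omega) (by omega) ?_
        · rw [updP_self, hb]
          simp only [cond_true]
          rw [Equiv.Perm.mul_apply]
          exact Equiv.swap_apply_left _ _
        · intro b hhb
          refine ⟨fun _ => by omega, fun hbf => ?_⟩
          exfalso
          rcases t with _ | ⟨z, t2⟩
          · simp at hhb
          · have hz : z = (a.1, b) := by simpa using hhb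
            have h2 := hnc 0 (by simp) (by simp) (by simp [hz])
            simp only [List.getElem_cons_zero, List.getElem_cons_succ, hz] at h2
            rw [hb, hbf] at h2
            exact absurd h2 (by decide)
      · intro hb
        refine buildP_pres t _ (m+1) a.1 (m+1) m ?_ (by omega) (by omega) ?_
        · rw [updP_self, hb]
          simp only [cond_false]
          rw [Equiv.Perm.mul_apply, Equiv.swap_apply_right]
          exact (s a.1).apply_symm_apply m
        · intro b hhb
          refine ⟨fun hbt => ?_, fun _ => by omega⟩
          exfalso
          rcases t with _ | ⟨z, t2⟩
          · simp at hhb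
          · have hz : z = (a.1, b) := by simpa using hhb
            have h2 := hnc 0 (by simp) (by simp) (by simp [hz])
            simp only [List.getElem_cons_zero, List.getElem_cons_succ, hz] at h2
            rw [hb, hbt] at h2
            exact absurd h2 (by decide)
    | j' + 1 =>
      simp only [List.getElem_cons_succ, buildP]
      have hj' : j' < t.length := by simpa using hj
      have IH := buildP_claims t (updP m a s) (m+1) (updP_fix hfix) (NCword_tail hnc) j' hj'
      have e1 : m + (j' + 1) = (m + 1) + j' := by omega
      rw [e1]
      exact IH

lemma perm_list_prod_apply (x : ℕ) : ∀ (l : List (Equiv.Perm ℕ)),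
    l.prod x = l.foldr (fun π y => π y) x
  | [] => by simp
  | π :: t => by
    simp only [List.prod_cons, List.foldr_cons, Equiv.Perm.mul_apply]
    rw [perm_list_prod_apply x t]

lemma foldl_path (F : (Fin 2 × Bool) → ℕ → ℕ) : ∀ (t : List (Fin 2 × Bool)) (m : ℕ),
    (∀ j (hj : j < t.length), F (t[j]'hj) (m+j) = m+j+1) →
    t.foldl (fun y a => F a y) m = m + t.length
  | [], m, _ => by simp
  | a :: t, m, h => by
    simp only [List.foldl_cons]
    have h0 : F a m = m + 1 := h 0 (by simp)
    rw [h0]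
    have hrec := foldl_path F t (m+1) (fun j hj => by
      have := h (j+1) (by simpa using Nat.succ_lt_succ hj)
      simp only [List.getElem_cons_succ] at this
      have e1 : m + (j + 1) = (m + 1) + j := by omega
      rw [e1] at this
      exact this)
    rw [hrec]
    simp only [List.length_cons]
    omega

/-- `phiF G` is the intersection of all maximal subgroups of finite index in `G`
(equal to `G` itself, i.e. `⊤`, if there are no such subgroups). -/
def phiF (G : Type*) [Group G] : Subgroup G :=
  ⨅ M ∈ {M : Subgroup G | IsCoatom M ∧ M.FiniteIndex}, M

/-- For the free group `F₂` of rank 2, `Φ_f(F₂)` is trivial. -/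
theorem phiF_freeGroup_two_eq_bot :
    phiF (FreeGroup (Fin 2)) = ⊥ := by
  rw [Subgroup.eq_bot_iff_forall]
  intro w hw
  by_contra hwne
  -- the reduced word of w
  set L := w.toWord with hL
  have hLne : L ≠ [] := fun h => hwne (FreeGroup.toWord_eq_nil_iff.mp h)
  set n := L.length with hn'
  have hn : 0 < n := List.length_pos_iff.mpr hLne
  set M := L.reverse with hM
  have hMlen : M.length = n := by simp [hM, hn']
  -- the word is reduced: no cancelling adjacent pairs
  have hNCL : NCword L := by
    intro j h1 h2 hgen
    by_contra hne
    have hbool : (L[j+1]'h2).2 = !(L[j]'h1).2 := by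
      cases hb1 : (L[j]'h1).2 <;> cases hb2 : (L[j+1]'h2).2 <;> simp_all
    have hsplit : L = L.take j ++ (L[j]'h1) :: (L[j+1]'h2) :: L.drop (j+2) := by
      conv_lhs => rw [← List.take_append_drop j L]
      congr 1
      rw [List.drop_eq_getElem_cons (by omega)]
      congr 1
      rw [List.drop_eq_getElem_cons (by omega)]
    have h1' : (L[j]'h1) = ((L[j]'h1).1, (L[j]'h1).2) := Prod.mk.eta.symm
    have h2' : (L[j+1]'h2) = ((L[j]'h1).1, !(L[j]'h1).2) := by
      rw [hgen, ← hbool]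
    have hred : FreeGroup.reduce L = L := FreeGroup.reduce_toWord w
    refine FreeGroup.reduce.not (L₁ := L) (L₂ := L.take j) (L₃ := L.drop (j+2))
      (x := (L[j]'h1).1) (b := (L[j]'h1).2) ?_
    rw [hred]
    conv_lhs => rw [hsplit]
    rw [← h1', ← h2']
  have hNCM : NCword M := NCword_reverse hNCL
  -- build the base permutations
  set s0 : Fin 2 → Equiv.Perm ℕ := fun _ => 1 with hs0
  have hfix0 : ∀ (i : Fin 2) j, 0 < j → s0 i j = j := by intro i j _; simp [hs0]
  set σ := buildP s0 0 M with hσ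
  have hfixσ : ∀ (i : Fin 2) j, n < j → σ i j = j := by
    intro i j hj
    rw [hσ]
    exact buildP_fix M s0 0 hfix0 i j (by rw [Nat.zero_add, hMlen]; omega)
  have hble : ∀ (i : Fin 2) x, x ≤ n → σ i x ≤ n := by
    intro i
    exact perm_fix_le (fun j hj => hfixσ i j hj)
  have hcl : ∀ j (hj : j < M.length),
      ((M[j]'hj).2 = true → σ (M[j]'hj).1 j = j+1) ∧
      ((M[j]'hj).2 = false → σ (M[j]'hj).1 (j+1) = j) := by
    intro j hj
    have h2 := buildP_claims M s0 0 hfix0 hNCM j hj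
    rw [← hσ] at h2
    simpa using h2
  -- choose a point d which is not a source of any constraint of generator 0
  set f : ℕ → ℕ := fun k => if (M.getD k ((0 : Fin 2), true)).2 then k else k + 1 with hf
  set S : Finset ℕ := (Finset.range n).image f with hS
  have hdex : ∃ d, d ≤ n ∧ d ∉ S := by
    by_contra hcon
    push_neg at hcon
    have hsub : Finset.range (n+1) ⊆ S := by
      intro d hd
      exact hcon d (Nat.lt_succ_iff.mp (Finset.mem_range.mp hd))
    have hcard := Finset.card_le_card hsub
    have hcard2 : S.card ≤ n := le_trans (Finset.card_image_le) (by simp)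
    simp only [Finset.card_range] at hcard
    omega
  obtain ⟨d, hdn, hdS⟩ := hdex
  set c := σ 0 d with hc
  have hcn : c ≤ n := hble 0 d hdn
  have hcfree : ∀ j (hj : j < M.length), (M[j]'hj).1 = 0 →
      (((M[j]'hj).2 = true → j+1 ≠ c) ∧ ((M[j]'hj).2 = false → j ≠ c)) := by
    intro j hj hi
    have hjn : j < n := by rw [← hMlen]; exact hj
    constructor
    · intro hb hcontra
      have hσj := (hcl j hj).1 hb
      rw [hi] at hσj
      have hjd : j = d := (σ 0).injective (by rw [hσj, hcontra])
      apply hdS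
      rw [hS]
      refine Finset.mem_image.mpr ⟨j, Finset.mem_range.mpr hjn, ?_⟩
      rw [hf]
      simp only []
      rw [List.getD_eq_getElem M _ hj, hb]
      simpa using hjd
    · intro hb hcontra
      have hσj := (hcl j hj).2 hb
      rw [hi] at hσj
      have hjd : j + 1 = d := (σ 0).injective (by rw [hσj, hcontra])
      apply hdS
      rw [hS]
      refine Finset.mem_image.mpr ⟨j, Finset.mem_range.mpr hjn, ?_⟩
      rw [hf]
      simp only []
      rw [List.getD_eq_getElem M _ hj, hb]
      simpa using hjd
  -- choose a prime p > n
  obtain ⟨p, hpn, hpp⟩ := Nat.exists_infinite_primes (n+1)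
  -- the connecting cycle
  set ζl : List ℕ := c :: List.range' (n+1) (p - (n+1)) with hζl
  have hζnd : ζl.Nodup := by
    rw [hζl, List.nodup_cons]
    constructor
    · intro hmem
      obtain ⟨i, _, hi⟩ := List.mem_range'.mp hmem
      omega
    · exact List.nodup_range' (step := 1) (by norm_num)
  set ζ : Equiv.Perm ℕ := ζl.formPerm with hζ
  have hζlen : ζl.length = 1 + (p - (n+1)) := by simp [hζl]; omega
  have hζ_le : ∀ x, x ≤ n → x ≠ c → ζ x = x := by
    intro x hx hxc
    refine List.formPerm_apply_of_notMem ?_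
    rw [hζl]
    intro hmem
    rcases List.mem_cons.mp hmem with h | h
    · exact hxc h
    · obtain ⟨i, _, hi⟩ := List.mem_range'.mp h; omega
  have hζ_ge : ∀ x, p ≤ x → ζ x = x := by
    intro x hx
    refine List.formPerm_apply_of_notMem ?_
    rw [hζl]
    intro hmem
    rcases List.mem_cons.mp hmem with h | h
    · omega
    · obtain ⟨i, hilt, hi⟩ := List.mem_range'.mp h; omega
  -- the final permutations
  set τ : Fin 2 → Equiv.Perm ℕ := fun i => if i = 0 then ζ * σ 0 else σ i with hτ
  have hτ0 : τ 0 = ζ * σ 0 := by simp [hτ]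
  have hτ_ge : ∀ (i : Fin 2) x, p ≤ x → τ i x = x := by
    intro i x hx
    by_cases hi : i = 0
    · rw [hi, hτ0, Equiv.Perm.mul_apply, hfixσ 0 x (by omega)]
      exact hζ_ge x hx
    · rw [show τ i = σ i from by simp [hτ, hi]]; exact hfixσ i x (by omega)
  have hτcl : ∀ j (hj : j < M.length),
      ((M[j]'hj).2 = true → τ (M[j]'hj).1 j = j+1) ∧
      ((M[j]'hj).2 = false → τ (M[j]'hj).1 (j+1) = j) := by
    intro j hj
    have hjn : j < n := by rw [← hMlen]; exact hj
    constructor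
    · intro hb
      have hσj := (hcl j hj).1 hb
      by_cases hi : (M[j]'hj).1 = 0
      · rw [hi] at hσj ⊢
        rw [hτ0, Equiv.Perm.mul_apply, hσj]
        exact hζ_le (j+1) (by omega) ((hcfree j hj hi).1 hb)
      · rw [show τ (M[j]'hj).1 = σ (M[j]'hj).1 from by simp [hτ, hi]]; exact hσj
    · intro hb
      have hσj := (hcl j hj).2 hb
      by_cases hi : (M[j]'hj).1 = 0
      · rw [hi] at hσj ⊢
        rw [hτ0, Equiv.Perm.mul_apply, hσj]
        exact hζ_le j (by omega) ((hcfree j hj hi).2 hb)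
      · rw [show τ (M[j]'hj).1 = σ (M[j]'hj).1 from by simp [hτ, hi]]; exact hσj
  -- the homomorphism and the action
  set φ : FreeGroup (Fin 2) →* Equiv.Perm ℕ := FreeGroup.lift τ with hφ
  letI : MulAction (FreeGroup (Fin 2)) ℕ := MulAction.compHom ℕ φ
  have hsmul : ∀ (g : FreeGroup (Fin 2)) (x : ℕ), g • x = φ g x := fun _ _ => rfl
  -- φ w moves 0 to n
  have hφw : φ w 0 = n := by
    have h1 : φ w = (List.map (fun x => bif x.2 then τ x.1 else (τ x.1)⁻¹) L).prod := by
      rw [hφ]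
      conv_lhs => rw [← FreeGroup.mk_toWord (x := w)]
      rw [FreeGroup.lift_mk]
    rw [h1, perm_list_prod_apply, List.foldr_map]
    have hLM : L = M.reverse := (List.reverse_reverse L).symm
    conv_lhs => rw [hLM]
    rw [List.foldr_reverse]
    have hsteps : ∀ j (hj : j < M.length),
        (fun a y => (bif a.2 then τ a.1 else (τ a.1)⁻¹) y) (M[j]'hj) (0+j) = 0+j+1 := by
      intro j hj
      simp only [Nat.zero_add]
      cases hb : (M[j]'hj).2
      · simp only [cond_false]
        have h2 := (hτcl j hj).2 hb
        rw [Equiv.Perm.inv_def, Equiv.symm_apply_eq]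
        exact h2.symm
      · simp only [cond_true]
        exact (hτcl j hj).1 hb
    have hfold := foldl_path (fun a y => (bif a.2 then τ a.1 else (τ a.1)⁻¹) y) M 0 hsteps
    simpa [hMlen] using hfold
  -- the stabilizer of 0
  set H : Subgroup (FreeGroup (Fin 2)) := MulAction.stabilizer (FreeGroup (Fin 2)) (0 : ℕ)
    with hH
  have hwH : w ∉ H := by
    intro hmem
    have h0 := MulAction.mem_stabilizer_iff.mp hmem
    rw [hsmul, hφw] at h0
    omega
  -- permutations fixing [p, ∞)
  set T : Subgroup (Equiv.Perm ℕ) :=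
    { carrier := {π : Equiv.Perm ℕ | ∀ x, p ≤ x → π x = x}
      one_mem' := fun _ _ => rfl
      mul_mem' := fun {π ρ} ha hb x hx => by
        rw [Equiv.Perm.mul_apply, hb x hx, ha x hx]
      inv_mem' := fun {π} h x hx => by
        conv_lhs => rw [← h x hx]
        exact π.symm_apply_apply x } with hT
  have hrange : ∀ g : FreeGroup (Fin 2), ∀ x, p ≤ x → φ g x = x := by
    intro g
    have hle : φ.range ≤ T := by
      rw [hφ, FreeGroup.range_lift_eq_closure]
      refine (Subgroup.closure_le T).mpr ?_
      rintro _ ⟨i, rfl⟩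
      exact fun x hx => hτ_ge i x hx
    exact hle ⟨g, rfl⟩
  -- the orbit of 0 is {0, ..., p-1}
  have horbstep : ∀ (g : FreeGroup (Fin 2)) (y : ℕ),
      y ∈ MulAction.orbit (FreeGroup (Fin 2)) (0 : ℕ) →
      φ g y ∈ MulAction.orbit (FreeGroup (Fin 2)) (0 : ℕ) := by
    rintro g y ⟨h, rfl⟩
    exact ⟨g * h, by show (g * h) • (0:ℕ) = φ g (h • (0:ℕ)); rw [mul_smul]; exact rfl⟩
  have horb : MulAction.orbit (FreeGroup (Fin 2)) (0 : ℕ) = Set.Iio p := by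
    apply Set.Subset.antisymm
    · rintro x ⟨g, rfl⟩
      simp only [Set.mem_Iio]
      rw [hsmul]
      by_contra hcge
      push_neg at hcge
      have h2 : φ g (φ g 0) = φ g 0 := hrange g (φ g 0) hcge
      have h3 : φ g 0 = 0 := (φ g).injective h2
      omega
    · intro x hx
      simp only [Set.mem_Iio] at hx
      have key : ∀ j, j < p → j ∈ MulAction.orbit (FreeGroup (Fin 2)) (0 : ℕ) := by
        intro j
        induction j using Nat.strong_induction_on with
        | _ j ih =>
          intro hjp
          rcases j with _ | j'
          · exact MulAction.mem_orbit_self 0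
          · by_cases hcase : j' < n
            · have hj' : j' < M.length := by rw [hMlen]; exact hcase
              have hj'o := ih j' (by omega) (by omega)
              cases hb : (M[j']'hj').2
              · have h2 := (hτcl j' hj').2 hb
                have h3 : φ ((FreeGroup.of ((M[j']'hj').1))⁻¹) j' = j' + 1 := by
                  rw [map_inv, hφ, FreeGroup.lift_apply_of]
                  rw [Equiv.Perm.inv_def, Equiv.symm_apply_eq]
                  exact h2.symm
                have hmem := horbstep ((FreeGroup.of ((M[j']'hj').1))⁻¹) j' hj'o
                rw [h3] at hmem
                exact hmem
              · have h2 := (hτcl j' hj').1 hb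
                have h3 : φ (FreeGroup.of ((M[j']'hj').1)) j' = j' + 1 := by
                  rw [hφ, FreeGroup.lift_apply_of]
                  exact h2
                have hmem := horbstep (FreeGroup.of ((M[j']'hj').1)) j' hj'o
                rw [h3] at hmem
                exact hmem
            · by_cases hn'' : j' = n
              · have hplt : n + 1 < p := by omega
                have hrg : List.range' (n+1) (p - (n+1)) =
                    (n+1) :: List.range' (n+2) (p - (n+2)) := by
                  have he : p - (n+1) = (p - (n+2)) + 1 := by omega
                  rw [he, List.range'_succ]
                have hζc : ζ c = n + 1 := by
                  have hnd2 := hζnd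
                  rw [hζl, hrg] at hnd2
                  rw [hζ, hζl, hrg]
                  exact List.formPerm_apply_head _ _ _ hnd2
                have h3 : φ (FreeGroup.of 0) d = n + 1 := by
                  rw [hφ, FreeGroup.lift_apply_of, hτ0, Equiv.Perm.mul_apply, ← hc]
                  exact hζc
                have hmem := horbstep (FreeGroup.of 0) d (ih d (by omega) (by omega))
                rw [h3] at hmem
                rw [hn'']
                exact hmem
              · have hgt : n < j' := by omega
                set k := j' - (n+1) with hk
                have hkp : j' = n + 1 + k := by omega
                have hidx1 : k + 1 < ζl.length := by rw [hζlen]; omega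
                have hidx2 : (k + 1) + 1 < ζl.length := by rw [hζlen]; omega
                have hget1 : ζl[k+1]'hidx1 = j' := by
                  simp only [hζl, List.getElem_cons_succ]
                  rw [List.getElem_range' (i := k) (by
                    simp only [hζl, List.length_cons, List.length_range'] at hidx1
                    simpa using (by omega : k < p - (n+1)))]
                  omega
                have hget2 : ζl[(k+1)+1]'hidx2 = j' + 1 := by
                  simp only [hζl, List.getElem_cons_succ]
                  rw [List.getElem_range' (i := k+1) (by
                    simp only [hζl, List.length_cons, List.length_range'] at hidx2
                    simpa using (by omega : k + 1 < p - (n+1)))]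
                  omega
                have hζj : ζ j' = j' + 1 := by
                  have h4 := List.formPerm_apply_lt_getElem ζl hζnd (k+1) hidx2
                  rw [hget1, hget2] at h4
                  rw [← hζ] at h4
                  exact h4
                have h3 : φ (FreeGroup.of 0) j' = j' + 1 := by
                  rw [hφ, FreeGroup.lift_apply_of, hτ0, Equiv.Perm.mul_apply,
                    hfixσ 0 j' (by omega)]
                  exact hζj
                have hmem := horbstep (FreeGroup.of 0) j' (ih j' (by omega) (by omega))
                rw [h3] at hmem
                exact hmem
      exact key x hx
  -- index of H is p
  have hindex : H.index = p := by
    rw [hH, MulAction.index_stabilizer, horb, ← Finset.coe_range,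
      Set.ncard_coe_finset, Finset.card_range]
  have hfin : H.FiniteIndex := ⟨by rw [hindex]; exact hpp.ne_zero⟩
  have hcoatom : IsCoatom H := by
    constructor
    · intro htop
      exact hwH (by rw [htop]; exact Subgroup.mem_top w)
    · intro K hlt
      have hle := hlt.le
      have hrel := Subgroup.relIndex_mul_index hle
      rw [hindex] at hrel
      have hdvd : K.index ∣ p := Dvd.intro_left _ hrel
      rcases (Nat.Prime.eq_one_or_self_of_dvd hpp _ hdvd) with h1 | h1
      · exact Subgroup.index_eq_one.mp h1
      · exfalso
        rw [h1] at hrel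
        have hrel1 : H.relIndex K = 1 :=
          Nat.eq_of_mul_eq_mul_right hpp.pos (by rw [hrel, Nat.one_mul])
        exact hlt.not_ge (Subgroup.relIndex_eq_one.mp hrel1)
  have hmem : H ∈ {M : Subgroup (FreeGroup (Fin 2)) | IsCoatom M ∧ M.FiniteIndex} :=
    ⟨hcoatom, hfin⟩
  have hle : phiF (FreeGroup (Fin 2)) ≤ H := iInf₂_le H hmem
  exact hwH (hle hw)
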